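/- For all positive integers m and q, the Ramanujan sum satisfies the Hölder–von Sterneck formula c_m(q) = μ(m/g) · φ(m) / φ(m/g), where g = gcd(m,q). -/

import Mathlib

open ArithmeticFunction

/-- The Ramanujan sum `c_m(q)`, the sum of the `q`-th powers of the primitive
`m`-th roots of unity. -/
noncomputable def ramanujanSum (m q : ℕ) : ℂ :=
  ∑ k ∈ (Finset.Icc 1 m).filter (fun k => Nat.gcd k m = 1),
    Complex.exp (2 * Real.pi * Complex.I * k * q / m)

section Auxiliary

open Finset
open scoped ArithmeticFunction.Moebius ArithmeticFunction.zeta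

lemma sum_moebius_div (n : ℕ) :
    ∑ d ∈ n.divisors, (μ d : ℂ) = if n = 1 then 1 else 0 := by
  calc ∑ d ∈ n.divisors, (μ d : ℂ)
      = ((μ : ArithmeticFunction ℂ) * ζ) n := by
        rw [coe_mul_zeta_apply]
        simp [intCoe_apply]
    _ = (1 : ArithmeticFunction ℂ) n := by rw [coe_moebius_mul_coe_zeta]
    _ = if n = 1 then 1 else 0 := one_apply

lemma sum_exp_Icc (n q : ℕ) (hn : 0 < n) :
    ∑ j ∈ Finset.Icc 1 n, Complex.exp (2 * Real.pi * Complex.I * j * q / n)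
      = if n ∣ q then (n : ℂ) else 0 := by
  have hn' : (n : ℂ) ≠ 0 := Nat.cast_ne_zero.2 hn.ne'
  set x : ℂ := Complex.exp (2 * Real.pi * Complex.I * q / n) with hxdef
  have hx : ∀ j : ℕ, Complex.exp (2 * Real.pi * Complex.I * j * q / n) = x ^ j := by
    intro j
    rw [hxdef, ← Complex.exp_nat_mul]
    ring_nf
  have hxn : x ^ n = 1 := by
    rw [hxdef, ← Complex.exp_nat_mul,
      show (n : ℂ) * (2 * Real.pi * Complex.I * q / n) = (q : ℕ) * (2 * Real.pi * Complex.I) by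
        field_simp]
    exact Complex.exp_nat_mul_two_pi_mul_I q
  simp_rw [hx]
  by_cases h : n ∣ q
  · obtain ⟨c, rfl⟩ := h
    have hx1 : x = 1 := by
      rw [hxdef, show 2 * Real.pi * Complex.I * (↑(n * c)) / n
          = (c : ℕ) * (2 * Real.pi * Complex.I) by push_cast; field_simp]
      exact Complex.exp_nat_mul_two_pi_mul_I c
    simp [hx1, if_pos (Dvd.intro c rfl)]
  · have h2 : (2 * (Real.pi : ℂ) * Complex.I) ≠ 0 := by
      simp [Real.pi_ne_zero, Complex.I_ne_zero]
    have hx1 : x ≠ 1 := by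
      intro hx1
      obtain ⟨k, hk⟩ := Complex.exp_eq_one_iff.1 (hxdef ▸ hx1)
      field_simp at hk
      have hq : (q : ℂ) = (k : ℂ) * n := by
        have h3 : (2 * (Real.pi : ℂ) * Complex.I) * (q : ℂ)
            = (2 * (Real.pi : ℂ) * Complex.I) * ((k : ℂ) * n) := by linear_combination (2 * (Real.pi : ℂ) * Complex.I) * hk
        exact mul_left_cancel₀ h2 h3
      have hqz : (q : ℤ) = k * n := by exact_mod_cast hq
      exact h (Int.natCast_dvd_natCast.mp ⟨k, by rw [hqz]; ring⟩)
    rw [if_neg h]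
    have h4 : ∑ j ∈ Finset.Icc 1 n, x ^ j = ∑ j ∈ Finset.range n, x ^ (1 + j) := by
      rw [← Finset.Ico_add_one_right_eq_Icc, Finset.sum_Ico_eq_sum_range]
      simp
    rw [h4]
    simp_rw [pow_add, pow_one, ← Finset.mul_sum, geom_sum_eq hx1, hxn, sub_self, zero_div,
      mul_zero]

lemma filter_dvd_eq_gcd_divisors {m : ℕ} (hm : m ≠ 0) (q : ℕ) :
    (m.divisors).filter (· ∣ q) = (Nat.gcd m q).divisors := by
  rw [← Nat.divisors_filter_dvd_of_dvd hm (Nat.gcd_dvd_left m q)]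
  apply Finset.filter_congr
  intro d hd
  exact ⟨fun h => Nat.dvd_gcd (Nat.mem_divisors.1 hd).1 h,
    fun h => h.trans (Nat.gcd_dvd_right m q)⟩

lemma sum_filter_dvd_Icc {m d : ℕ} (hdpos : 0 < d) (f : ℕ → ℂ) :
    ∑ k ∈ (Finset.Icc 1 m).filter (fun k => d ∣ k), f k
      = ∑ j ∈ Finset.Icc 1 (m / d), f (d * j) := by
  refine Finset.sum_bij' (fun k _ => k / d) (fun j _ => d * j) ?_ ?_ ?_ ?_ ?_
  · intro k hk
    simp only [Finset.mem_filter, Finset.mem_Icc] at hk ⊢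
    obtain ⟨⟨h1, h2⟩, h3⟩ := hk
    exact ⟨Nat.one_le_div_iff hdpos |>.2 (Nat.le_of_dvd h1 h3), Nat.div_le_div_right h2⟩
  · intro j hj
    simp only [Finset.mem_Icc] at hj
    simp only [Finset.mem_filter, Finset.mem_Icc]
    refine ⟨⟨Nat.one_le_iff_ne_zero.2 ?_, ?_⟩, Dvd.intro j rfl⟩
    · exact Nat.mul_ne_zero hdpos.ne' (by omega)
    · calc d * j ≤ d * (m / d) := Nat.mul_le_mul_left d hj.2
        _ ≤ m := Nat.mul_div_le m d
  · intro k hk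
    simp only [Finset.mem_filter] at hk
    exact Nat.mul_div_cancel' hk.2
  · intro j _
    exact Nat.mul_div_cancel_left j hdpos
  · intro k hk
    simp only [Finset.mem_filter] at hk
    rw [Nat.mul_div_cancel' hk.2]

lemma ramanujanSum_eq_sum_gcd_divisors (m q : ℕ) (hm : 0 < m) :
    ramanujanSum m q = ∑ d ∈ (Nat.gcd m q).divisors, (μ (m / d) : ℂ) * d := by
  have hm' : m ≠ 0 := hm.ne'
  calc ramanujanSum m q
      = ∑ k ∈ Finset.Icc 1 m, (if Nat.gcd k m = 1 then (1 : ℂ) else 0)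
          * Complex.exp (2 * Real.pi * Complex.I * k * q / m) := by
        rw [ramanujanSum, Finset.sum_filter]
        simp_rw [boole_mul]
    _ = ∑ k ∈ Finset.Icc 1 m, (∑ d ∈ m.divisors, if d ∣ k then (μ d : ℂ) else 0)
          * Complex.exp (2 * Real.pi * Complex.I * k * q / m) := by
        refine Finset.sum_congr rfl fun k hk => ?_
        congr 1
        rw [← Finset.sum_filter, filter_dvd_eq_gcd_divisors hm' k, sum_moebius_div]
        exact if_congr (by rw [Nat.gcd_comm]) rfl rfl
    _ = ∑ d ∈ m.divisors, ∑ k ∈ Finset.Icc 1 m, (if d ∣ k then (μ d : ℂ) else 0)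
          * Complex.exp (2 * Real.pi * Complex.I * k * q / m) := by
        simp_rw [Finset.sum_mul]
        rw [Finset.sum_comm]
    _ = ∑ d ∈ m.divisors, (μ d : ℂ) * (if (m / d) ∣ q then ((m / d : ℕ) : ℂ) else 0) := by
        refine Finset.sum_congr rfl fun d hd => ?_
        obtain ⟨hddvd, -⟩ := Nat.mem_divisors.1 hd
        have hdpos : 0 < d := Nat.pos_of_mem_divisors hd
        have hndpos : 0 < m / d := Nat.div_pos (Nat.le_of_dvd hm hddvd) hdpos
        simp_rw [ite_mul, zero_mul]
        rw [← Finset.sum_filter, sum_filter_dvd_Icc hdpos, ← Finset.mul_sum]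
        congr 1
        rw [← sum_exp_Icc (m / d) q hndpos]
        refine Finset.sum_congr rfl fun j hj => ?_
        congr 1
        have hmdn : (m : ℂ) = (d : ℂ) * ((m / d : ℕ) : ℂ) := by
          rw [← Nat.cast_mul, Nat.mul_div_cancel' hddvd]
        have hd0 : (d : ℂ) ≠ 0 := Nat.cast_ne_zero.2 hdpos.ne'
        have hnd0 : ((m / d : ℕ) : ℂ) ≠ 0 := Nat.cast_ne_zero.2 hndpos.ne'
        rw [hmdn]
        push_cast
        field_simp
    _ = ∑ d ∈ m.divisors,
          ((fun e => (μ (m / e) : ℂ) * (if e ∣ q then (e : ℂ) else 0)) (m / d)) := by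
        refine Finset.sum_congr rfl fun d hd => ?_
        obtain ⟨hddvd, -⟩ := Nat.mem_divisors.1 hd
        simp only
        rw [Nat.div_div_self hddvd hm']
    _ = ∑ d ∈ m.divisors, (μ (m / d) : ℂ) * (if d ∣ q then (d : ℂ) else 0) :=
        Nat.sum_div_divisors m (fun e => (μ (m / e) : ℂ) * (if e ∣ q then (e : ℂ) else 0))
    _ = ∑ d ∈ (Nat.gcd m q).divisors, (μ (m / d) : ℂ) * d := by
        simp_rw [mul_ite, mul_zero]
        rw [← Finset.sum_filter, filter_dvd_eq_gcd_divisors hm' q]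

lemma gcd_mul_coprime {m n : ℕ} (h : Nat.Coprime m n) (q : ℕ) :
    Nat.gcd (m * n) q = Nat.gcd m q * Nat.gcd n q := by
  apply Nat.dvd_antisymm
  · have hx : Nat.gcd (Nat.gcd (m * n) q) m * Nat.gcd (Nat.gcd (m * n) q) n
        = Nat.gcd (m * n) q :=
      (Nat.gcd_mul_gcd_eq_iff_dvd_mul_of_coprime h).2 (Nat.gcd_dvd_left _ _)
    calc Nat.gcd (m * n) q = _ := hx.symm
      _ ∣ Nat.gcd m q * Nat.gcd n q :=
        mul_dvd_mul
          (Nat.dvd_gcd (Nat.gcd_dvd_right _ _)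
            ((Nat.gcd_dvd_left _ _).trans (Nat.gcd_dvd_right _ _)))
          (Nat.dvd_gcd (Nat.gcd_dvd_right _ _)
            ((Nat.gcd_dvd_left _ _).trans (Nat.gcd_dvd_right _ _)))
  · refine Nat.dvd_gcd (mul_dvd_mul (Nat.gcd_dvd_left _ _) (Nat.gcd_dvd_left _ _)) ?_
    exact Nat.Coprime.mul_dvd_of_dvd_of_dvd
      ((h.coprime_dvd_left (Nat.gcd_dvd_left m q)).coprime_dvd_right (Nat.gcd_dvd_left n q))
      (Nat.gcd_dvd_right _ _) (Nat.gcd_dvd_right _ _)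

noncomputable def hAF (q : ℕ) : ArithmeticFunction ℂ :=
  ⟨fun d => if d ∣ q then (d : ℂ) else 0, by simp⟩

lemma hAF_apply (q d : ℕ) : hAF q d = if d ∣ q then (d : ℂ) else 0 := rfl

lemma hAF_mult (q : ℕ) : (hAF q).IsMultiplicative := by
  refine ⟨by simp [hAF_apply], @fun a b hab => ?_⟩
  simp only [hAF_apply]
  by_cases hd : a * b ∣ q
  · rw [if_pos hd, if_pos ((dvd_mul_right a b).trans hd),
      if_pos ((dvd_mul_left b a).trans hd)]
    push_cast; ring
  · rw [if_neg hd]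
    by_cases ha : a ∣ q
    · rw [if_pos ha, if_neg (fun hb => hd (hab.mul_dvd_of_dvd_of_dvd ha hb)), mul_zero]
    · rw [if_neg ha, zero_mul]

noncomputable def gAF (q : ℕ) : ArithmeticFunction ℂ :=
  ⟨fun m => if m = 0 then 0 else
      (μ (m / Nat.gcd m q) : ℂ) * (Nat.totient m : ℂ) / (Nat.totient (m / Nat.gcd m q) : ℂ),
    if_pos rfl⟩

lemma gAF_apply (q m : ℕ) (hm : m ≠ 0) :
    gAF q m = (μ (m / Nat.gcd m q) : ℂ) * (Nat.totient m : ℂ)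
      / (Nat.totient (m / Nat.gcd m q) : ℂ) := if_neg hm

lemma gAF_mult (q : ℕ) : (gAF q).IsMultiplicative := by
  have h1 : gAF q 1 = 1 := by rw [gAF_apply q 1 one_ne_zero]; simp
  refine ⟨h1, @fun a b hab => ?_⟩
  rcases eq_or_ne a 0 with rfl | ha
  · have hb1 : b = 1 := by simpa [Nat.coprime_zero_left] using hab
    subst hb1; simp [h1]
  rcases eq_or_ne b 0 with rfl | hb
  · have ha1 : a = 1 := by simpa [Nat.coprime_zero_right] using hab
    subst ha1; simp [h1]
  rw [gAF_apply _ _ (Nat.mul_ne_zero ha hb), gAF_apply _ _ ha, gAF_apply _ _ hb]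
  have hga := Nat.gcd_dvd_left a q
  have hgb := Nat.gcd_dvd_left b q
  have hdiv : a * b / (Nat.gcd a q * Nat.gcd b q)
      = (a / Nat.gcd a q) * (b / Nat.gcd b q) := (Nat.div_mul_div_comm hga hgb).symm
  have hcop : (a / Nat.gcd a q).Coprime (b / Nat.gcd b q) :=
    Nat.Coprime.coprime_dvd_left (Nat.div_dvd_of_dvd hga)
      (Nat.Coprime.coprime_dvd_right (Nat.div_dvd_of_dvd hgb) hab)
  rw [gcd_mul_coprime hab q, hdiv, isMultiplicative_moebius.map_mul_of_coprime hcop,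
    Nat.totient_mul hab, Nat.totient_mul hcop]
  push_cast
  rw [div_mul_div_comm]
  congr 1
  ring

noncomputable def fAF (q : ℕ) : ArithmeticFunction ℂ :=
  hAF q * ((μ : ArithmeticFunction ℤ) : ArithmeticFunction ℂ)

lemma fAF_mult (q : ℕ) : (fAF q).IsMultiplicative :=
  (hAF_mult q).mul (isMultiplicative_moebius.intCast)

lemma fAF_apply (q m : ℕ) (hm : m ≠ 0) :
    fAF q m = ∑ d ∈ (Nat.gcd m q).divisors, (μ (m / d) : ℂ) * d := by
  rw [fAF, mul_apply,
    Nat.sum_divisorsAntidiagonal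
      (fun a b => hAF q a * ((μ : ArithmeticFunction ℤ) : ArithmeticFunction ℂ) b)]
  simp_rw [hAF_apply, intCoe_apply, ite_mul, zero_mul]
  rw [← Finset.sum_filter, filter_dvd_eq_gcd_divisors hm q]
  exact Finset.sum_congr rfl fun d hd => mul_comm _ _

lemma fg_prime_pow (q : ℕ) (p i : ℕ) (hp : p.Prime) :
    fAF q (p ^ i) = gAF q (p ^ i) := by
  have hp0 : p ≠ 0 := hp.pos.ne'
  have hpi : (p : ℕ) ^ i ≠ 0 := pow_ne_zero i hp0
  obtain ⟨j, hji, hgcd⟩ := (Nat.dvd_prime_pow hp).1 (Nat.gcd_dvd_left (p ^ i) q)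
  have hpj_dvd_q : p ^ j ∣ q := hgcd ▸ Nat.gcd_dvd_right _ _
  have hpC : ((p : ℂ)) ≠ 0 := Nat.cast_ne_zero.2 hp0
  have hp1C : (p : ℂ) - 1 ≠ 0 := by
    have : (1 : ℂ) ≠ (p : ℂ) := by exact_mod_cast hp.one_lt.ne
    exact sub_ne_zero.2 this.symm
  have hf : fAF q (p ^ i) = ∑ t ∈ Finset.range (j + 1), (μ (p ^ (i - t)) : ℂ) * (p : ℂ) ^ t := by
    rw [fAF_apply q _ hpi, hgcd, Nat.sum_divisors_prime_pow hp]
    refine Finset.sum_congr rfl fun t ht => ?_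
    rw [Finset.mem_range] at ht
    rw [Nat.pow_div (by omega) hp.pos]
    push_cast
    ring
  have hzero : ∀ t, 2 ≤ i - t → (μ (p ^ (i - t)) : ℂ) * (p : ℂ) ^ t = 0 := by
    intro t ht
    rw [moebius_apply_prime_pow hp (by omega), if_neg (by omega)]
    simp
  have hgval : gAF q (p ^ i)
      = (μ (p ^ (i - j)) : ℂ) * (Nat.totient (p ^ i) : ℂ) / (Nat.totient (p ^ (i - j)) : ℂ) := by
    rw [gAF_apply q _ hpi, hgcd, Nat.pow_div hji hp.pos]
  rcases Nat.lt_trichotomy (j + 1) i with hcase | hcase | hcase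
  · rw [hf, hgval, Finset.sum_eq_zero fun t ht => hzero t (by
      rw [Finset.mem_range] at ht; omega)]
    rw [moebius_apply_prime_pow hp (by omega : i - j ≠ 0), if_neg (by omega)]
    simp
  · subst hcase
    rw [hf, hgval]
    rw [Finset.sum_range_succ, Finset.sum_eq_zero fun t ht => hzero t (by
      rw [Finset.mem_range] at ht; omega), zero_add]
    rw [show j + 1 - j = 1 by omega, pow_one (M := ℕ)]
    rw [moebius_apply_prime hp, Nat.totient_prime hp,
      Nat.totient_prime_pow hp (Nat.succ_pos j), show j + 1 - 1 = j by omega]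
    push_cast [Nat.cast_sub hp.one_le]
    field_simp
  · have hij : j = i := by omega
    subst hij
    rcases Nat.eq_zero_or_pos j with rfl | hjpos
    · simp only [pow_zero]
      rw [(fAF_mult q).map_one, (gAF_mult q).map_one]
    obtain ⟨k, rfl⟩ := Nat.exists_eq_add_of_lt hjpos
    rw [zero_add] at *
    rw [hf, hgval, Finset.sum_range_succ, Finset.sum_range_succ,
      Finset.sum_eq_zero fun t ht => hzero t (by rw [Finset.mem_range] at ht; omega), zero_add]
    rw [Nat.sub_self, pow_zero (M := ℕ), show k + 1 - k = 1 by omega, pow_one (M := ℕ)]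
    rw [moebius_apply_prime hp, moebius_apply_one,
      Nat.totient_prime_pow hp (Nat.succ_pos k), Nat.totient_one]
    push_cast [Nat.cast_sub hp.one_le]
    field_simp
    ring

end Auxiliary

/-- The Hölder–von Sterneck formula for the Ramanujan sums. -/
theorem ramanujanSum_eq_moebius_mul_totient_div (m q : ℕ) (hm : 0 < m) (hq : 0 < q) :
    ramanujanSum m q =
      (moebius (m / Nat.gcd m q) : ℂ) * (Nat.totient m : ℂ) /
        (Nat.totient (m / Nat.gcd m q) : ℂ) := by
  have hfg : fAF q = gAF q :=
    (ArithmeticFunction.IsMultiplicative.eq_iff_eq_on_prime_powers (fAF q) (fAF_mult q) (gAF q) (gAF_mult q)).2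
      (fun p i hp => fg_prime_pow q p i hp)
  calc ramanujanSum m q
      = fAF q m := (ramanujanSum_eq_sum_gcd_divisors m q hm).trans (fAF_apply q m hm.ne').symm
    _ = gAF q m := by rw [hfg]
    _ = _ := gAF_apply q m hm.ne'
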